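/- Under the strong heterogeneity hypotheses with θ < δ/2 and γ > 1 − δ/2 for some δ ∈ [3/4, 3−√5), for all sufficiently large n, with probability at least 1 − n^{−1/2}, the largest adjacency eigenvalue of a random graph in G_{ℓ,θ,γ}(w) satisfies λ_max ≤ 5(max_{1≤k≤n} w_k)^δ. -/

import Mathlib

open Finset MeasureTheory ProbabilityTheory



lemma chernoff01 {Ω : Type*} [MeasurableSpace Ω] (μ : Measure Ω) [IsProbabilityMeasure μ]
    {ι : Type*} (Y : ι → Ω → ℝ) (s : Finset ι)
    (hmeas : ∀ i, Measurable (Y i))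
    (h01 : ∀ i ω, Y i ω = 0 ∨ Y i ω = 1)
    (hindep : iIndepFun Y μ)
    (p : ι → ℝ) (hp : ∀ i ∈ s, (μ {ω | Y i ω = 1}).toReal ≤ p i)
    (a : ℝ) :
    μ {ω | a ≤ ∑ i ∈ s, Y i ω} ≤ ENNReal.ofReal (Real.exp (2 * ∑ i ∈ s, p i - a)) := by
  have hY01 : ∀ i ω, 0 ≤ Y i ω ∧ Y i ω ≤ 1 := by
    intro i ω; rcases h01 i ω with h | h <;> rw [h] <;> norm_num
  -- integrability of exp of each
  have hint : ∀ i, Integrable (fun ω => Real.exp (1 * Y i ω)) μ := by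
    intro i
    refine Integrable.mono' (integrable_const (Real.exp 1))
      (((hmeas i).const_mul 1).exp.aestronglyMeasurable) ?_
    filter_upwards with ω
    rw [Real.norm_eq_abs, Real.abs_exp, one_mul]
    exact Real.exp_le_exp.2 (hY01 i ω).2
  -- mgf of each variable at t = 1
  have hmgf : ∀ i ∈ s, mgf (Y i) μ 1 ≤ Real.exp (2 * p i) := by
    intro i hi
    have hpt : ∀ ω, Real.exp (1 * Y i ω) = 1 + (Real.exp 1 - 1) * Y i ω := by
      intro ω; rcases h01 i ω with h | h <;> rw [h] <;> simp [Real.exp_zero]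
    have hind : (fun ω => Y i ω) = Set.indicator {ω | Y i ω = 1} (fun _ => (1:ℝ)) := by
      funext ω
      rcases h01 i ω with h | h
      · rw [h, Set.indicator_apply]
        simp only [Set.mem_setOf_eq, h]
        norm_num
      · rw [h, Set.indicator_apply]
        simp only [Set.mem_setOf_eq, h]
        norm_num
    have hEY : ∫ ω, Y i ω ∂μ = (μ {ω | Y i ω = 1}).toReal := by
      rw [hind, integral_indicator_const]
      · simp [Measure.real]
      · exact (hmeas i) (measurableSet_singleton 1)
    have hEYnn : 0 ≤ ∫ ω, Y i ω ∂μ := by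
      apply integral_nonneg; intro ω; exact (hY01 i ω).1
    have hintY : Integrable (Y i) μ := by
      refine Integrable.mono' (integrable_const 1) ((hmeas i).aestronglyMeasurable) ?_
      filter_upwards with ω
      rw [Real.norm_eq_abs, abs_of_nonneg (hY01 i ω).1]; exact (hY01 i ω).2
    have : mgf (Y i) μ 1 = 1 + (Real.exp 1 - 1) * ∫ ω, Y i ω ∂μ := by
      rw [mgf]
      calc ∫ ω, Real.exp (1 * Y i ω) ∂μ = ∫ ω, (1 + (Real.exp 1 - 1) * Y i ω) ∂μ := by
            congr 1; funext ω; exact hpt ω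
        _ = 1 + (Real.exp 1 - 1) * ∫ ω, Y i ω ∂μ := by
            rw [integral_add (integrable_const 1) (hintY.const_mul _),
              integral_const_mul]
            simp
    rw [this]
    have h1 : Real.exp 1 - 1 ≤ 2 := by
      have := Real.exp_one_lt_d9
      norm_num at this ⊢; linarith
    have h2 : (Real.exp 1 - 1) * ∫ ω, Y i ω ∂μ ≤ 2 * p i := by
      have := hp i hi
      have h3 : (Real.exp 1 - 1) * ∫ ω, Y i ω ∂μ ≤ 2 * ∫ ω, Y i ω ∂μ :=
        mul_le_mul_of_nonneg_right h1 hEYnn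
      have h4 : 2 * ∫ ω, Y i ω ∂μ ≤ 2 * p i := by
        rw [hEY]; linarith [hp i hi]
      linarith
    calc 1 + (Real.exp 1 - 1) * ∫ ω, Y i ω ∂μ ≤ 1 + 2 * p i := by linarith
      _ ≤ Real.exp (2 * p i) := by linarith [Real.add_one_le_exp (2 * p i)]
  -- integrable exp of sum
  have hintS : Integrable (fun ω => Real.exp (1 * ∑ i ∈ s, Y i ω)) μ := by
    refine Integrable.mono' (integrable_const (Real.exp s.card))
      ((Finset.measurable_sum s (fun i _ => hmeas i)).const_mul 1).exp.aestronglyMeasurable ?_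
    filter_upwards with ω
    rw [Real.norm_eq_abs, Real.abs_exp, one_mul]
    apply Real.exp_le_exp.2
    calc ∑ i ∈ s, Y i ω ≤ ∑ i ∈ s, (1:ℝ) := Finset.sum_le_sum (fun i _ => (hY01 i ω).2)
      _ = s.card := by simp
  -- Chernoff
  have hcher := measure_ge_le_exp_mul_mgf (μ := μ) (X := fun ω => ∑ i ∈ s, Y i ω) a
    (by norm_num : (0:ℝ) ≤ 1) hintS
  have hmgfsum : mgf (fun ω => ∑ i ∈ s, Y i ω) μ 1 ≤ Real.exp (2 * ∑ i ∈ s, p i) := by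
    have := hindep.mgf_sum hmeas s (t := 1)
    have heq : mgf (fun ω => ∑ i ∈ s, Y i ω) μ 1 = ∏ i ∈ s, mgf (Y i) μ 1 := by
      rw [← this]; congr 1; funext ω; simp
    rw [heq]
    calc ∏ i ∈ s, mgf (Y i) μ 1 ≤ ∏ i ∈ s, Real.exp (2 * p i) :=
          Finset.prod_le_prod (fun i _ => mgf_nonneg) hmgf
      _ = Real.exp (∑ i ∈ s, 2 * p i) := by rw [Real.exp_sum]
      _ = Real.exp (2 * ∑ i ∈ s, p i) := by rw [Finset.mul_sum]
  have hfin : μ {ω | a ≤ ∑ i ∈ s, Y i ω} ≠ ⊤ := measure_ne_top _ _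
  rw [← ENNReal.ofReal_toReal hfin]
  apply ENNReal.ofReal_le_ofReal
  calc (μ {ω | a ≤ ∑ i ∈ s, Y i ω}).toReal
      ≤ Real.exp (-1 * a) * mgf (fun ω => ∑ i ∈ s, Y i ω) μ 1 := hcher
    _ ≤ Real.exp (-1 * a) * Real.exp (2 * ∑ i ∈ s, p i) := by
        apply mul_le_mul_of_nonneg_left hmgfsum (Real.exp_nonneg _)
    _ = Real.exp (2 * ∑ i ∈ s, p i - a) := by rw [← Real.exp_add]; ring_nf



lemma eigen_bound {n : ℕ} (A : Matrix (Fin n) (Fin n) ℝ)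
    (hA0 : ∀ i j, 0 ≤ A i j) (hA1 : ∀ i j, A i j ≤ 1)
    (H R : Finset (Fin n)) (hcover : ∀ k, k ∈ H ∨ k ∈ R)
    (h r dH : ℝ) (hh : 0 ≤ h) (hr : 0 ≤ r) (hdH : 0 ≤ dH)
    (hcard : (H.card : ℝ) ≤ h)
    (hrowR : ∀ j ∈ R, ∑ k, A j k ≤ r)
    (hrowH : ∀ i ∈ H, ∑ k, A i k ≤ dH)
    (lam : ℝ) (v : Fin n → ℝ) (hv : v ≠ 0)
    (heig : A.mulVec v = lam • v) :
    lam ≤ h + r + Real.sqrt (h * dH) := by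
  by_contra hcon
  push_neg at hcon
  set q := Real.sqrt (h * dH) with hq
  have hqnn : 0 ≤ q := Real.sqrt_nonneg _
  have hq2 : q * q = h * dH := Real.mul_self_sqrt (by positivity)
  have hlam : 0 < lam := by linarith
  classical
  set sa : Finset ℝ := insert (0:ℝ) (H.image fun k => |v k|) with hsadef
  set sb : Finset ℝ := insert (0:ℝ) (R.image fun k => |v k|) with hsbdef
  have hsane : sa.Nonempty := ⟨0, Finset.mem_insert_self _ _⟩
  have hsbne : sb.Nonempty := ⟨0, Finset.mem_insert_self _ _⟩
  set a : ℝ := sa.max' hsane with hadef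
  set b : ℝ := sb.max' hsbne with hbdef
  have haub : ∀ k ∈ H, |v k| ≤ a := by
    intro k hk
    refine Finset.le_max' sa _ ?_
    rw [hsadef]
    exact Finset.mem_insert_of_mem (Finset.mem_image_of_mem _ hk)
  have hbub : ∀ k ∈ R, |v k| ≤ b := by
    intro k hk
    refine Finset.le_max' sb _ ?_
    rw [hsbdef]
    exact Finset.mem_insert_of_mem (Finset.mem_image_of_mem _ hk)
  have ha0 : 0 ≤ a := by
    refine Finset.le_max' sa _ ?_
    rw [hsadef]; exact Finset.mem_insert_self _ _
  have hb0 : 0 ≤ b := by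
    refine Finset.le_max' sb _ ?_
    rw [hsbdef]; exact Finset.mem_insert_self _ _
  have hamem : a = 0 ∨ ∃ i₀ ∈ H, a = |v i₀| := by
    have hmm : a ∈ sa := Finset.max'_mem sa hsane
    rcases Finset.mem_insert.1 hmm with h' | h'
    · exact Or.inl h'
    · obtain ⟨i₀, hi₀, he⟩ := Finset.mem_image.1 h'
      exact Or.inr ⟨i₀, hi₀, he.symm⟩
  have hbmem : b = 0 ∨ ∃ j₀ ∈ R, b = |v j₀| := by
    have hmm : b ∈ sb := Finset.max'_mem sb hsbne
    rcases Finset.mem_insert.1 hmm with h' | h'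
    · exact Or.inl h'
    · obtain ⟨j₀, hj₀, he⟩ := Finset.mem_image.1 h'
      exact Or.inr ⟨j₀, hj₀, he.symm⟩
  -- the key row inequality
  have key : ∀ k : Fin n, lam * |v k| ≤ (∑ j ∈ H, A k j * |v j|) + ∑ j ∈ R, A k j * |v j| := by
    intro k
    have hmv : (A.mulVec v) k = ∑ j, A k j * v j := by
      simp [Matrix.mulVec, dotProduct]
    have h1 : lam * |v k| = |∑ j, A k j * v j| := by
      rw [← hmv, heig]
      simp only [Pi.smul_apply, smul_eq_mul, abs_mul, abs_of_pos hlam]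
    have h2 : |∑ j, A k j * v j| ≤ ∑ j, A k j * |v j| := by
      refine le_trans (Finset.abs_sum_le_sum_abs _ _) (le_of_eq ?_)
      refine Finset.sum_congr rfl fun j _ => ?_
      rw [abs_mul, abs_of_nonneg (hA0 k j)]
    have h3 : ∑ j, A k j * |v j| ≤ (∑ j ∈ H, A k j * |v j|) + ∑ j ∈ R, A k j * |v j| := by
      have hU : (Finset.univ : Finset (Fin n)) = H ∪ R := by
        symm
        apply Finset.eq_univ_of_forall
        intro x
        rcases hcover x with hk | hk
        · exact Finset.mem_union_left _ hk
        · exact Finset.mem_union_right _ hk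
      rw [hU]
      have hsplit : H ∪ R = H ∪ (R \ H) := by
        rw [Finset.union_sdiff_self_eq_union]
      rw [hsplit, Finset.sum_union Finset.disjoint_sdiff]
      gcongr
      · exact fun j hj _ => mul_nonneg (hA0 k j) (abs_nonneg _)
      · exact Finset.sdiff_subset
    linarith [h1.le.trans (h2.trans h3)]
  -- bounds on the two partial sums
  have hHsum : ∀ k : Fin n, ∑ j ∈ H, A k j * |v j| ≤ h * a := by
    intro k
    calc ∑ j ∈ H, A k j * |v j| ≤ ∑ j ∈ H, 1 * a := by
          refine Finset.sum_le_sum fun j hj => ?_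
          exact mul_le_mul (hA1 k j) (haub j hj) (abs_nonneg _) zero_le_one
      _ = (H.card : ℝ) * a := by rw [Finset.sum_const, nsmul_eq_mul]; ring
      _ ≤ h * a := mul_le_mul_of_nonneg_right hcard ha0
  have hRsum : ∀ k : Fin n, ∑ j ∈ R, A k j * |v j| ≤ (∑ j, A k j) * b := by
    intro k
    calc ∑ j ∈ R, A k j * |v j| ≤ ∑ j ∈ R, A k j * b :=
          Finset.sum_le_sum fun j hj => mul_le_mul_of_nonneg_left (hbub j hj) (hA0 k j)
      _ = (∑ j ∈ R, A k j) * b := by rw [Finset.sum_mul]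
      _ ≤ (∑ j, A k j) * b := by
          refine mul_le_mul_of_nonneg_right ?_ hb0
          exact Finset.sum_le_sum_of_subset_of_nonneg (Finset.subset_univ R)
            (fun j _ _ => hA0 k j)
  -- the two master inequalities
  have IneqR : lam * b ≤ h * a + r * b := by
    rcases hbmem with hbe | ⟨j₀, hj₀, hbeq⟩
    · rw [hbe]
      nlinarith
    · have := key j₀
      have h2 := hHsum j₀
      have h3 := (hRsum j₀).trans (mul_le_mul_of_nonneg_right (hrowR j₀ hj₀) hb0)
      rw [← hbeq] at this
      linarith
  have IneqH : lam * a ≤ h * a + dH * b := by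
    rcases hamem with hae | ⟨i₀, hi₀, haeq⟩
    · rw [hae]
      nlinarith
    · have := key i₀
      have h2 := hHsum i₀
      have h3 := (hRsum i₀).trans (mul_le_mul_of_nonneg_right (hrowH i₀ hi₀) hb0)
      rw [← haeq] at this
      linarith
  -- a and b are both positive
  have hex : ∃ k, v k ≠ 0 := by
    by_contra hall
    push_neg at hall
    exact hv (funext hall)
  obtain ⟨k, hk⟩ := hex
  have hklb : 0 < a ∨ 0 < b := by
    rcases hcover k with hkH | hkR
    · exact Or.inl (lt_of_lt_of_le (abs_pos.2 hk) (haub k hkH))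
    · exact Or.inr (lt_of_lt_of_le (abs_pos.2 hk) (hbub k hkR))
  have hlr : q + h < lam - r := by linarith
  have hlh : q + r < lam - h := by linarith
  have hlrp : 0 < lam - r := by linarith
  have hlhp : 0 < lam - h := by linarith
  have e1 : (lam - r) * b ≤ h * a := by linarith
  have e2 : (lam - h) * a ≤ dH * b := by linarith
  have hapos : 0 < a := by
    rcases hklb with ha | hb
    · exact ha
    · by_contra hna
      push_neg at hna
      have ha0' : a = 0 := le_antisymm hna ha0
      rw [ha0'] at e1
      nlinarith
  have hbpos : 0 < b := by
    by_contra hnb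
    push_neg at hnb
    have hb0' : b = 0 := le_antisymm hnb hb0
    rw [hb0'] at e2
    nlinarith
  have e3 : ((lam - r) * b) * ((lam - h) * a) ≤ (h * a) * (dH * b) :=
    mul_le_mul e1 e2 (by positivity) (by positivity)
  have e4 : (lam - r) * (lam - h) ≤ h * dH := by
    have hab : 0 < a * b := mul_pos hapos hbpos
    nlinarith
  have e5 : (q + h) * (q + r) < (lam - r) * (lam - h) :=
    mul_lt_mul'' hlr hlh (by positivity) (by positivity)
  nlinarith


lemma rpow_helper {C e x : ℝ} (he : 0 < e) (hC : 0 ≤ C) (h1 : 1 ≤ x)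
    (h2 : C ^ (1/e) ≤ x) : C ≤ x ^ e := by
  have hx0 : (0:ℝ) ≤ C ^ (1/e) := Real.rpow_nonneg hC _
  have : (C ^ (1/e)) ^ e ≤ x ^ e := Real.rpow_le_rpow hx0 h2 he.le
  calc C = (C ^ (1/e)) ^ e := by
        rw [← Real.rpow_mul hC, one_div, inv_mul_cancel₀ he.ne', Real.rpow_one]
    _ ≤ x ^ e := this

lemma mul_rpow_bound {W c e1 e2 : ℝ} (hW : 0 < W) (h : c ≤ W ^ (e2 - e1)) :
    c * W ^ e1 ≤ W ^ e2 := by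
  have h0 : (0:ℝ) ≤ W ^ e1 := (Real.rpow_pos_of_pos hW _).le
  calc c * W ^ e1 ≤ W ^ (e2 - e1) * W ^ e1 := mul_le_mul_of_nonneg_right h h0
    _ = W ^ e2 := by rw [← Real.rpow_add hW]; ring_nf

set_option maxHeartbeats 1000000 in
/-- under the strong heterogeneity hypotheses with `θ < δ/2` and
`γ > 1 − δ/2` for some `δ ∈ [3/4, 3−√5)`, for all sufficiently large `n`, with
probability at least `1 − n^{−1/2}`, every eigenvalue of the adjacency matrix of a
random graph in `G_{ℓ,θ,γ}(w)` is at most `5(max_k w_k)^δ`. -/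
theorem stmt11 (δ θ γ β Γ₀ Γ₁ Γ₂ : ℝ)
    (hδ1 : (3:ℝ)/4 ≤ δ) (hδ2 : δ < 3 - Real.sqrt 5)
    (hθpos : 0 < θ) (hθ : θ < δ / 2) (hγ : γ > 1 - δ / 2) (hγ1 : γ < 1)
    (hβ : 0 < β) (hΓ₀ : 0 < Γ₀) (hΓ₁ : 0 < Γ₁) (hΓ₂ : 0 < Γ₂)
    (w : ℕ → ℕ → ℝ) (ℓ : ℕ → ℕ) (hℓmono : Monotone ℓ)
    (hℓ : ∀ n : ℕ, 1 ≤ n → 1 ≤ ℓ n ∧ ℓ n ≤ n)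
    (hwpos : ∀ n : ℕ, 1 ≤ n → ∀ i ∈ Icc 1 n, 0 < w n i)
    (hwmono : ∀ n i j : ℕ, 1 ≤ i → i ≤ j → j ≤ n → w n j ≤ w n i)
    (hadm : ∀ n : ℕ, 1 ≤ n → (w n 1) ^ 2 ≤ ∑ k ∈ Icc 1 n, w n k)
    -- [H0] cardinality of hubs
    (hH0 : ∀ n : ℕ, 1 ≤ n → (ℓ n : ℝ) < Γ₀ * (w n 1) ^ θ)
    -- [H2] poorly connected nodes
    (hH2 : ∀ n i : ℕ, ℓ n < i → i ≤ n →
      Γ₁ * (Real.log (n : ℝ)) ^ ((1:ℝ) + β) < w n i ∧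
      w n i < Γ₂ * (w n 1) ^ ((1:ℝ) - γ))
    -- the random graph model: independent Bernoulli edge indicators
    (Ω : ℕ → Type) [∀ n, MeasurableSpace (Ω n)]
    (μ : ∀ n, Measure (Ω n)) [∀ n, IsProbabilityMeasure (μ n)]
    (X : ∀ n : ℕ, ℕ → ℕ → Ω n → ℝ)
    (hmeas : ∀ n i j, Measurable (X n i j))
    (hsymm : ∀ n i j, X n i j = X n j i)
    (hdiag : ∀ n i ω, X n i i ω = 0)
    (h01 : ∀ n i j ω, X n i j ω = 0 ∨ X n i j ω = 1)
    (hber : ∀ n, ∀ i ∈ Icc 1 n, ∀ j ∈ Icc 1 n, i ≠ j →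
      μ n {ω | X n i j ω = 1} = ENNReal.ofReal (w n i * w n j / ∑ k ∈ Icc 1 n, w n k))
    (hindep : ∀ n, iIndepFun
      (fun (p : {p : ℕ × ℕ // 1 ≤ p.1 ∧ p.1 < p.2 ∧ p.2 ≤ n}) ω =>
        X n p.val.1 p.val.2 ω) (μ n)) :
    ∃ N : ℕ, ∀ n > N,
      ENNReal.ofReal (1 - (n : ℝ) ^ (-(1/2 : ℝ))) ≤
        μ n {ω | ∀ (lam : ℝ) (v : Fin n → ℝ), v ≠ 0 →
          Matrix.mulVec (Matrix.of fun i j : Fin n => X n (i.1 + 1) (j.1 + 1) ω) v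
            = lam • v →
          lam ≤ 5 * (w n 1) ^ δ} := by
  -- basic constants
  have hsqrt5 : (2:ℝ) < Real.sqrt 5 := by
    have h4 : Real.sqrt 4 = 2 := by
      rw [show (4:ℝ) = 2^2 by norm_num, Real.sqrt_sq (by norm_num : (0:ℝ) ≤ 2)]
    rw [← h4]
    exact Real.sqrt_lt_sqrt (by norm_num) (by norm_num)
  have hδpos : 0 < δ := by linarith
  have hδlt1 : δ < 1 := by linarith
  have hγδ : 1 - γ < δ / 2 := by linarith
  set K : ℝ := 1 + Γ₂/Γ₁ + |Real.log Γ₀| + 2*θ/δ with hKdef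
  have hK1 : 1 ≤ K := by
    have h1 : 0 ≤ Γ₂/Γ₁ := le_of_lt (div_pos hΓ₂ hΓ₁)
    have h2 : 0 ≤ |Real.log Γ₀| := abs_nonneg _
    have h3 : 0 ≤ 2*θ/δ := by positivity
    rw [hKdef]; linarith
  have hKpos : 0 < K := by linarith
  -- thresholds
  set A0 : ℝ := Γ₀ ^ (1/(δ-θ)) with hA0def
  set B0 : ℝ := (4*Γ₂) ^ (1/(δ-(1-γ))) with hB0def
  set C0 : ℝ := (3*K) ^ (1/(δ/2)) with hC0def
  set D0 : ℝ := (Γ₀*(2+(3/2)*K)) ^ (1/(2*δ-1-θ)) with hD0def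
  have hA0nn : 0 ≤ A0 := Real.rpow_nonneg hΓ₀.le _
  have hB0nn : 0 ≤ B0 := Real.rpow_nonneg (by positivity) _
  have hC0nn : 0 ≤ C0 := Real.rpow_nonneg (by positivity) _
  have hD0nn : 0 ≤ D0 := Real.rpow_nonneg (by positivity) _
  set W0 : ℝ := 1 + A0 + B0 + C0 + D0 with hW0def
  -- divergence of w n 1
  have ht1 : Filter.Tendsto (fun n : ℕ => Γ₁ * (Real.log n) ^ ((1:ℝ)+β))
      Filter.atTop Filter.atTop := by
    have hbase : Filter.Tendsto (fun x : ℝ => Γ₁ * x ^ ((1:ℝ)+β))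
        Filter.atTop Filter.atTop :=
      (tendsto_rpow_atTop (by linarith)).const_mul_atTop hΓ₁
    exact hbase.comp (Real.tendsto_log_atTop.comp tendsto_natCast_atTop_atTop)
  have ht2 : Filter.Tendsto (fun n : ℕ => ((n:ℝ)/Γ₀) ^ ((1:ℝ)/θ))
      Filter.atTop Filter.atTop :=
    (tendsto_rpow_atTop (by positivity)).comp
      (tendsto_natCast_atTop_atTop.atTop_div_const hΓ₀)
  have hdiv : ∀ᶠ n : ℕ in Filter.atTop, W0 ≤ w n 1 ∧ 3 ≤ n := by
    filter_upwards [ht1.eventually_ge_atTop W0, ht2.eventually_ge_atTop W0,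
      Filter.eventually_ge_atTop 3] with n h1 h2 h3
    refine ⟨?_, h3⟩
    have hn1 : 1 ≤ n := by omega
    rcases lt_or_ge (ℓ n) n with hl | hl
    · have hmem : ℓ n + 1 ≤ n := hl
      have hw2 := (hH2 n (ℓ n + 1) (Nat.lt_succ_self _) hmem).1
      have hmono := hwmono n 1 (ℓ n + 1) le_rfl (by omega) hmem
      linarith
    · have hH0n := hH0 n hn1
      have hnl : (n:ℝ) ≤ (ℓ n : ℝ) := Nat.cast_le.2 hl
      have hwpos1 : 0 < w n 1 := hwpos n hn1 1 (by simp [hn1])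
      have hpow : ((n:ℝ)/Γ₀) < (w n 1) ^ θ := (div_lt_iff₀ hΓ₀).2 (by nlinarith)
      have hle : ((n:ℝ)/Γ₀) ^ ((1:ℝ)/θ) ≤ ((w n 1) ^ θ) ^ ((1:ℝ)/θ) :=
        Real.rpow_le_rpow (div_nonneg n.cast_nonneg hΓ₀.le) hpow.le (by positivity)
      have heq : ((w n 1) ^ θ) ^ ((1:ℝ)/θ) = w n 1 := by
        rw [← Real.rpow_mul hwpos1.le, mul_one_div, div_self hθpos.ne', Real.rpow_one]
      rw [heq] at hle
      linarith
  rw [Filter.eventually_atTop] at hdiv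
  obtain ⟨N, hN⟩ := hdiv
  refine ⟨N, fun n hn => ?_⟩
  obtain ⟨hW0n, hn3⟩ := hN n (le_of_lt hn)
  have hn1 : 1 ≤ n := by omega
  set W := w n 1 with hWdef
  have hWpos : 0 < W := hwpos n hn1 1 (by simp [hn1])
  have hW1 : 1 ≤ W := by
    have h1 : (1:ℝ) ≤ W0 := by rw [hW0def]; linarith
    linarith
  set S := ∑ k ∈ Icc 1 n, w n k with hSdef
  have hSpos : 0 < S := Finset.sum_pos (fun i hi => hwpos n hn1 i hi) ⟨1, by simp [hn1]⟩
  set L := Real.log n with hLdef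
  have hnR : (3:ℝ) ≤ (n:ℝ) := by exact_mod_cast hn3
  have hnpos : (0:ℝ) < n := by linarith
  have hL1 : 1 ≤ L := by
    rw [hLdef]
    have h3 : (1:ℝ) < Real.log 3 := by
      rw [Real.lt_log_iff_exp_lt (by norm_num)]
      have := Real.exp_one_lt_d9
      linarith
    have h4 : Real.log 3 ≤ Real.log n := Real.log_le_log (by norm_num) hnR
    linarith
  -- instantiated thresholds
  have hth1 : Γ₀ ≤ W ^ (δ - θ) := by
    refine rpow_helper (by linarith) hΓ₀.le hW1 ?_
    calc Γ₀ ^ (1/(δ-θ)) = A0 := by rw [hA0def]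
      _ ≤ W0 := by rw [hW0def]; linarith
      _ ≤ W := hW0n
  have hth2 : 4*Γ₂ ≤ W ^ (δ - (1-γ)) := by
    refine rpow_helper (by linarith) (by positivity) hW1 ?_
    calc (4*Γ₂) ^ (1/(δ-(1-γ))) = B0 := by rw [hB0def]
      _ ≤ W0 := by rw [hW0def]; linarith
      _ ≤ W := hW0n
  have hth3 : 3*K ≤ W ^ (δ/2) := by
    refine rpow_helper (by linarith) (by positivity) hW1 ?_
    calc (3*K) ^ (1/(δ/2)) = C0 := by rw [hC0def]
      _ ≤ W0 := by rw [hW0def]; linarith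
      _ ≤ W := hW0n
  have hth4 : Γ₀*(2+(3/2)*K) ≤ W ^ (2*δ-1-θ) := by
    refine rpow_helper (by linarith) (by positivity) hW1 ?_
    calc (Γ₀*(2+(3/2)*K)) ^ (1/(2*δ-1-θ)) = D0 := by rw [hD0def]
      _ ≤ W0 := by rw [hW0def]; linarith
      _ ≤ W := hW0n
  have hWhalf : (0:ℝ) < W ^ (δ/2) := Real.rpow_pos_of_pos hWpos _
  have hWhalf1 : (1:ℝ) ≤ W ^ (δ/2) := Real.one_le_rpow hW1 (by linarith)
  -- the log bound
  have hlogK : L ≤ K * W ^ (δ/2) := by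
    rcases lt_or_ge (ℓ n) n with hl | hl
    · have hw2 := hH2 n (ℓ n + 1) (Nat.lt_succ_self _) hl
      have hLb : L ≤ L ^ ((1:ℝ)+β) := by
        calc L = L ^ ((1:ℝ)) := (Real.rpow_one L).symm
          _ ≤ L ^ ((1:ℝ)+β) := Real.rpow_le_rpow_of_exponent_le hL1 (by linarith)
      have hcomb : Γ₁ * L < Γ₂ * W ^ ((1:ℝ) - γ) := by
        have hmul : Γ₁ * L ≤ Γ₁ * L ^ ((1:ℝ)+β) := mul_le_mul_of_nonneg_left hLb hΓ₁.le
        linarith [hw2.1, hw2.2]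
      have hWexp : W ^ ((1:ℝ)-γ) ≤ W ^ (δ/2) :=
        Real.rpow_le_rpow_of_exponent_le hW1 (by linarith)
      have h5 : L ≤ (Γ₂/Γ₁) * W ^ (δ/2) := by
        rw [div_mul_eq_mul_div, le_div_iff₀ hΓ₁]
        have hmul2 : Γ₂ * W ^ ((1:ℝ)-γ) ≤ Γ₂ * W ^ (δ/2) :=
          mul_le_mul_of_nonneg_left hWexp hΓ₂.le
        have : L * Γ₁ = Γ₁ * L := mul_comm _ _
        linarith
      calc L ≤ (Γ₂/Γ₁) * W ^ (δ/2) := h5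
        _ ≤ K * W ^ (δ/2) := by
          refine mul_le_mul_of_nonneg_right ?_ hWhalf.le
          rw [hKdef]
          have : 0 ≤ |Real.log Γ₀| := abs_nonneg _
          have : 0 ≤ 2*θ/δ := by positivity
          linarith
    · have hnl : (n:ℝ) ≤ (ℓ n : ℝ) := Nat.cast_le.2 hl
      have hH0n := hH0 n hn1
      have hlog1 : L ≤ Real.log (Γ₀ * W ^ θ) :=
        Real.log_le_log hnpos (by linarith)
      have hlog2 : Real.log (Γ₀ * W ^ θ) = Real.log Γ₀ + θ * Real.log W := by
        rw [Real.log_mul hΓ₀.ne' (Real.rpow_pos_of_pos hWpos θ).ne', Real.log_rpow hWpos]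
      have hlogW : Real.log W ≤ (2/δ) * W ^ (δ/2) := by
        have h6 : Real.log (W ^ (δ/2)) = (δ/2) * Real.log W := Real.log_rpow hWpos _
        have h7 : Real.log (W ^ (δ/2)) ≤ W ^ (δ/2) - 1 :=
          Real.log_le_sub_one_of_pos hWhalf
        have hpos2 : (0:ℝ) < 2/δ := by positivity
        have h7' : (δ/2) * Real.log W ≤ W ^ (δ/2) - 1 := by rw [← h6]; exact h7
        have h7'' : (2/δ) * ((δ/2) * Real.log W) ≤ (2/δ) * (W ^ (δ/2) - 1) :=
          mul_le_mul_of_nonneg_left h7' hpos2.le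
        have heq : (2/δ) * ((δ/2) * Real.log W) = Real.log W := by field_simp
        have hexp : (2/δ) * (W ^ (δ/2) - 1) = (2/δ) * W ^ (δ/2) - 2/δ := by ring
        linarith
      have hlogWnn : 0 ≤ Real.log W := Real.log_nonneg hW1
      calc L ≤ Real.log Γ₀ + θ * Real.log W := by rw [← hlog2]; exact hlog1
        _ ≤ |Real.log Γ₀| + θ * ((2/δ) * W ^ (δ/2)) := by
            have h8 := le_abs_self (Real.log Γ₀)
            have h9 : θ * Real.log W ≤ θ * ((2/δ) * W ^ (δ/2)) :=
              mul_le_mul_of_nonneg_left hlogW hθpos.le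
            linarith
        _ ≤ (|Real.log Γ₀| + 2*θ/δ) * W ^ (δ/2) := by
            have h10 : |Real.log Γ₀| * 1 ≤ |Real.log Γ₀| * W ^ (δ/2) :=
              mul_le_mul_of_nonneg_left hWhalf1 (abs_nonneg _)
            have h11 : θ * ((2/δ) * W ^ (δ/2)) = (2*θ/δ) * W ^ (δ/2) := by ring
            linarith
        _ ≤ K * W ^ (δ/2) := by
            refine mul_le_mul_of_nonneg_right ?_ hWhalf.le
            rw [hKdef]
            have : 0 ≤ Γ₂/Γ₁ := (div_pos hΓ₂ hΓ₁).le
            linarith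
  -- the degree variables and good event
  set D : ℕ → Ω n → ℝ := fun i ω => ∑ j ∈ (Icc 1 n).erase i, X n i j ω with hDdef
  set G : Set (Ω n) := {ω | ∀ i ∈ Icc 1 n, D i ω < 2 * w n i + (3/2) * L} with hGdef
  have hDmeas : ∀ i, Measurable (D i) := fun i =>
    Finset.measurable_sum _ (fun j _ => hmeas n i j)
  have hGmeas : MeasurableSet G := by
    have hGset : G = ⋂ i ∈ Icc 1 n, {ω | D i ω < 2 * w n i + (3/2) * L} := by
      ext ω; simp [hGdef, Set.mem_iInter]
    rw [hGset]
    exact MeasurableSet.biInter (Icc 1 n : Finset ℕ).countable_toSet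
      (fun i _ => measurableSet_lt (hDmeas i) measurable_const)
  have hbad : ∀ i ∈ Icc 1 n,
      μ n {ω | 2 * w n i + (3/2) * L ≤ D i ω} ≤ ENNReal.ofReal ((n:ℝ) ^ (-(3/2) : ℝ)) := by
    intro i hi
    obtain ⟨hi1, hin⟩ := Finset.mem_Icc.1 hi
    classical
    set E := (Icc 1 n).erase i with hEdef
    have hEprop : ∀ j ∈ E, j ≠ i ∧ 1 ≤ j ∧ j ≤ n := by
      intro j hj
      obtain ⟨hne, hmem⟩ := Finset.mem_erase.1 hj
      exact ⟨hne, (Finset.mem_Icc.1 hmem).1, (Finset.mem_Icc.1 hmem).2⟩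
    set f : {j // j ∈ E} → {p : ℕ × ℕ // 1 ≤ p.1 ∧ p.1 < p.2 ∧ p.2 ≤ n} := fun j =>
      if h : j.1 < i then ⟨(j.1, i), (hEprop j.1 j.2).2.1, h, hin⟩
      else ⟨(i, j.1), hi1,
        lt_of_le_of_ne (not_lt.1 h) (Ne.symm (hEprop j.1 j.2).1), (hEprop j.1 j.2).2.2⟩
      with hfdef
    have hfinj : Function.Injective f := by
      intro x y hxy
      apply Subtype.ext
      have hval : (f x).1 = (f y).1 := congrArg Subtype.val hxy
      by_cases hx : x.1 < i
      · by_cases hy : y.1 < i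
        · simp only [hfdef, dif_pos hx, dif_pos hy] at hval
          exact (Prod.ext_iff.1 hval).1
        · simp only [hfdef, dif_pos hx, dif_neg hy] at hval
          have h1' := (Prod.ext_iff.1 hval).1
          omega
      · by_cases hy : y.1 < i
        · simp only [hfdef, dif_neg hx, dif_pos hy] at hval
          have h1' := (Prod.ext_iff.1 hval).1
          omega
        · simp only [hfdef, dif_neg hx, dif_neg hy] at hval
          exact (Prod.ext_iff.1 hval).2
    set T := E.attach.image f with hTdef
    have hsumY : ∀ ω, ∑ q ∈ T, X n q.1.1 q.1.2 ω = D i ω := by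
      intro ω
      rw [hTdef, Finset.sum_image (fun x _ y _ h => hfinj h)]
      have hDi : D i ω = ∑ j ∈ E, X n i j ω := rfl
      rw [hDi, ← Finset.sum_attach E (fun j => X n i j ω)]
      apply Finset.sum_congr rfl
      intro j _
      by_cases hj : j.1 < i
      · simp only [hfdef, dif_pos hj]
        exact congrFun (hsymm n j.1 i) ω
      · simp only [hfdef, dif_neg hj]
    have hsump : ∑ q ∈ T, (w n q.1.1 * w n q.1.2 / S) ≤ w n i := by
      rw [hTdef, Finset.sum_image (fun x _ y _ h => hfinj h)]
      have heach : ∀ j ∈ E.attach,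
          w n (f j).1.1 * w n (f j).1.2 / S = w n i / S * w n j.1 := by
        intro j _
        by_cases hj : j.1 < i
        · simp only [hfdef, dif_pos hj]; ring
        · simp only [hfdef, dif_neg hj]; ring
      rw [Finset.sum_congr rfl heach, ← Finset.mul_sum]
      rw [Finset.sum_attach E (fun j => w n j)]
      have hle : ∑ j ∈ E, w n j ≤ S := by
        rw [hSdef, hEdef]
        exact Finset.sum_le_sum_of_subset_of_nonneg (Finset.erase_subset _ _)
          (fun j hj _ => (hwpos n hn1 j hj).le)
      have hwi : 0 < w n i := hwpos n hn1 i hi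
      calc w n i / S * ∑ j ∈ E, w n j ≤ w n i / S * S :=
            mul_le_mul_of_nonneg_left hle (by positivity)
        _ = w n i := div_mul_cancel₀ _ hSpos.ne'
    have hp : ∀ q ∈ T, (μ n {ω | X n q.1.1 q.1.2 ω = 1}).toReal
        ≤ w n q.1.1 * w n q.1.2 / S := by
      intro q _
      obtain ⟨hq1, hq2, hq3⟩ := q.2
      have hm1 : q.1.1 ∈ Icc 1 n := Finset.mem_Icc.2 ⟨hq1, le_of_lt (lt_of_lt_of_le hq2 hq3)⟩
      have hm2 : q.1.2 ∈ Icc 1 n := Finset.mem_Icc.2 ⟨le_trans hq1 hq2.le, hq3⟩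
      have hw1' := (hwpos n hn1 _ hm1).le
      have hw2' := (hwpos n hn1 _ hm2).le
      rw [hber n q.1.1 hm1 q.1.2 hm2 (ne_of_lt hq2)]
      rw [ENNReal.toReal_ofReal (by positivity)]
    have happ := chernoff01 (μ n)
      (fun (q : {p : ℕ × ℕ // 1 ≤ p.1 ∧ p.1 < p.2 ∧ p.2 ≤ n}) ω => X n q.1.1 q.1.2 ω) T
      (fun q => hmeas n q.1.1 q.1.2) (fun q ω => h01 n q.1.1 q.1.2 ω) (hindep n)
      (fun q => w n q.1.1 * w n q.1.2 / S) hp (2 * w n i + (3/2) * L)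
    have hseteq : {ω | 2 * w n i + (3/2) * L ≤ ∑ q ∈ T, X n q.1.1 q.1.2 ω}
        = {ω | 2 * w n i + (3/2) * L ≤ D i ω} := by
      ext ω; simp only [Set.mem_setOf_eq, hsumY ω]
    rw [hseteq] at happ
    refine le_trans happ (ENNReal.ofReal_le_ofReal ?_)
    have hexp1 : 2 * (∑ q ∈ T, w n q.1.1 * w n q.1.2 / S) - (2 * w n i + (3/2) * L)
        ≤ -((3/2) * L) := by linarith
    calc Real.exp (2 * (∑ q ∈ T, w n q.1.1 * w n q.1.2 / S) - (2 * w n i + (3/2) * L))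
        ≤ Real.exp (-((3/2) * L)) := Real.exp_le_exp.2 hexp1
      _ = (n:ℝ) ^ (-(3/2) : ℝ) := by
          rw [Real.rpow_def_of_pos hnpos, hLdef]
          congr 1
          ring
  -- union bound on the complement of the good event
  have hcompl : μ n Gᶜ ≤ ENNReal.ofReal ((n:ℝ) ^ (-(1/2):ℝ)) := by
    have hsub : Gᶜ ⊆ ⋃ i ∈ (Icc 1 n : Finset ℕ), {ω | 2 * w n i + (3/2) * L ≤ D i ω} := by
      intro ω hω
      rw [hGdef] at hω
      simp only [Set.mem_compl_iff, Set.mem_setOf_eq, not_forall, not_lt] at hω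
      obtain ⟨i, hi, hge⟩ := hω
      exact Set.mem_biUnion hi hge
    calc μ n Gᶜ ≤ μ n (⋃ i ∈ (Icc 1 n : Finset ℕ), {ω | 2 * w n i + (3/2) * L ≤ D i ω}) :=
          measure_mono hsub
      _ ≤ ∑ i ∈ Icc 1 n, μ n {ω | 2 * w n i + (3/2) * L ≤ D i ω} :=
          measure_biUnion_finset_le _ _
      _ ≤ ∑ _i ∈ Icc 1 n, ENNReal.ofReal ((n:ℝ) ^ (-(3/2):ℝ)) := Finset.sum_le_sum hbad
      _ = (n : ENNReal) * ENNReal.ofReal ((n:ℝ) ^ (-(3/2):ℝ)) := by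
          rw [Finset.sum_const, Nat.card_Icc]
          simp [nsmul_eq_mul]
      _ = ENNReal.ofReal ((n:ℝ) ^ (-(1/2):ℝ)) := by
          rw [← ENNReal.ofReal_natCast n, ← ENNReal.ofReal_mul (Nat.cast_nonneg n)]
          congr 1
          have hh1 : (n:ℝ) * (n:ℝ) ^ (-(3/2):ℝ) = (n:ℝ) ^ ((1:ℝ) + -(3/2)) := by
            rw [Real.rpow_add hnpos, Real.rpow_one]
          rw [hh1]
          norm_num
  -- the deterministic part
  have hsubG : G ⊆ {ω | ∀ (lam : ℝ) (v : Fin n → ℝ), v ≠ 0 →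
      Matrix.mulVec (Matrix.of fun i j : Fin n => X n (i.1 + 1) (j.1 + 1) ω) v = lam • v →
      lam ≤ 5 * (w n 1) ^ δ} := by
    intro ω hω
    simp only [Set.mem_setOf_eq]
    intro lam v hv heig
    have hωG : ∀ i ∈ Icc 1 n, D i ω < 2 * w n i + (3/2) * L := hω
    set Amat := Matrix.of fun i j : Fin n => X n (i.1 + 1) (j.1 + 1) ω with hAdef
    have hA0' : ∀ i j : Fin n, 0 ≤ Amat i j := by
      intro i j
      rcases h01 n (i.1+1) (j.1+1) ω with h | h <;> simp [hAdef, h]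
    have hA1' : ∀ i j : Fin n, Amat i j ≤ 1 := by
      intro i j
      rcases h01 n (i.1+1) (j.1+1) ω with h | h <;> simp [hAdef, h]
    set HS := Finset.univ.filter (fun i : Fin n => i.1 + 1 ≤ ℓ n) with hHSdef
    set RS := Finset.univ.filter (fun i : Fin n => ℓ n < i.1 + 1) with hRSdef
    have hcover : ∀ k : Fin n, k ∈ HS ∨ k ∈ RS := by
      intro k
      rcases le_or_gt (k.1+1) (ℓ n) with h | h
      · exact Or.inl (Finset.mem_filter.2 ⟨Finset.mem_univ _, h⟩)
      · exact Or.inr (Finset.mem_filter.2 ⟨Finset.mem_univ _, h⟩)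
    have hrowsum : ∀ i : Fin n, ∑ j, Amat i j = D (i.1+1) ω := by
      intro i
      have h1 : ∑ j : Fin n, Amat i j = ∑ j ∈ Finset.range n, X n (i.1+1) (j+1) ω :=
        Fin.sum_univ_eq_sum_range (fun j => X n (i.1+1) (j+1) ω) n
      have himg : (Finset.range n).image (fun j => j + 1) = Icc 1 n := by
        ext m
        simp only [Finset.mem_image, Finset.mem_range, Finset.mem_Icc]
        constructor
        · rintro ⟨j, hj, rfl⟩; omega
        · rintro ⟨h1', h2'⟩; exact ⟨m - 1, by omega, by omega⟩
      have h2 : ∑ m ∈ Icc 1 n, X n (i.1+1) m ω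
          = ∑ j ∈ Finset.range n, X n (i.1+1) (j+1) ω := by
        rw [← himg, Finset.sum_image (fun a _ b _ h => by omega)]
      have hmem : i.1+1 ∈ Icc 1 n := Finset.mem_Icc.2 ⟨by omega, by have := i.isLt; omega⟩
      have hDi : D (i.1+1) ω = ∑ j ∈ (Icc 1 n).erase (i.1+1), X n (i.1+1) j ω := rfl
      have h3 : ∑ j ∈ (Icc 1 n).erase (i.1+1), X n (i.1+1) j ω + X n (i.1+1) (i.1+1) ω
          = ∑ m ∈ Icc 1 n, X n (i.1+1) m ω :=
        Finset.sum_erase_add _ _ hmem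
      rw [h1, ← h2, ← h3, hdiag n (i.1+1) ω, add_zero, hDi]
    have hDlt : ∀ i : Fin n, ∑ j, Amat i j < 2 * w n (i.1+1) + (3/2) * L := by
      intro i
      rw [hrowsum i]
      exact hωG (i.1+1) (Finset.mem_Icc.2 ⟨by omega, by have := i.isLt; omega⟩)
    have hWδpos : 0 < W ^ δ := Real.rpow_pos_of_pos hWpos δ
    have hcardHS : ((HS.card : ℝ)) ≤ Γ₀ * W ^ θ := by
      have hc1 : HS.card ≤ ℓ n := by
        have hci : HS.card = (HS.image (fun i : Fin n => i.1)).card :=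
          (Finset.card_image_of_injective _ Fin.val_injective).symm
        rw [hci]
        have hsub2 : HS.image (fun i : Fin n => i.1) ⊆ Finset.range (ℓ n) := by
          intro m hm
          obtain ⟨i, hiH, rfl⟩ := Finset.mem_image.1 hm
          have := (Finset.mem_filter.1 hiH).2
          exact Finset.mem_range.2 (by omega)
        calc (HS.image (fun i : Fin n => i.1)).card ≤ (Finset.range (ℓ n)).card :=
              Finset.card_le_card hsub2
          _ = ℓ n := Finset.card_range _
      calc ((HS.card : ℝ)) ≤ (ℓ n : ℝ) := Nat.cast_le.2 hc1
        _ ≤ Γ₀ * W ^ θ := (hH0 n hn1).le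
    have hrowR : ∀ j ∈ RS, ∑ k, Amat j k ≤ W ^ δ := by
      intro j hj
      have hjl : ℓ n < j.1 + 1 := (Finset.mem_filter.1 hj).2
      have hjn : j.1 + 1 ≤ n := by have := j.isLt; omega
      have hw2 := (hH2 n (j.1+1) hjl hjn).2
      have h2a : 4*Γ₂ * W ^ ((1:ℝ)-γ) ≤ W ^ δ :=
        mul_rpow_bound hWpos (by rw [show δ - ((1:ℝ)-γ) = δ - (1-γ) by ring]; exact hth2)
      have h2b : 3*K * W ^ (δ/2) ≤ W ^ δ :=
        mul_rpow_bound hWpos (by rw [show δ - δ/2 = δ/2 by ring]; exact hth3)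
      have hD := hDlt j
      linarith [hlogK]
    have hrowH : ∀ i ∈ HS, ∑ k, Amat i k ≤ (2 + (3/2)*K) * W := by
      intro i _
      have hin : i.1 + 1 ≤ n := by have := i.isLt; omega
      have hwle : w n (i.1+1) ≤ W := hwmono n 1 (i.1+1) le_rfl (by omega) hin
      have hWhW : W ^ (δ/2) ≤ W := by
        calc W ^ (δ/2) ≤ W ^ (1:ℝ) := Real.rpow_le_rpow_of_exponent_le hW1 (by linarith)
          _ = W := Real.rpow_one W
      have hD := hDlt i
      have h9 : K * W ^ (δ/2) ≤ K * W := mul_le_mul_of_nonneg_left hWhW hKpos.le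
      have h10 := hlogK
      linarith
    have hbound := eigen_bound Amat hA0' hA1' HS RS hcover (Γ₀ * W ^ θ) (W ^ δ)
      ((2 + (3/2)*K) * W) (by positivity) hWδpos.le (by positivity)
      hcardHS hrowR hrowH lam v hv heig
    have hb1 : Γ₀ * W ^ θ ≤ W ^ δ := mul_rpow_bound hWpos hth1
    have hprod : (Γ₀ * W ^ θ) * ((2 + (3/2)*K) * W) ≤ W ^ δ * W ^ δ := by
      have hW1' : W ^ (1:ℝ) = W := Real.rpow_one W
      have hre : (Γ₀ * W ^ θ) * ((2 + (3/2)*K) * W)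
          = (Γ₀*(2+(3/2)*K)) * (W ^ (θ+(1:ℝ))) := by
        rw [Real.rpow_add hWpos, hW1']; ring
      have h2δ : W ^ δ * W ^ δ = W ^ (2*δ) := by
        rw [← Real.rpow_add hWpos]; ring_nf
      rw [hre, h2δ]
      exact mul_rpow_bound hWpos
        (by rw [show 2*δ - (θ+(1:ℝ)) = 2*δ-1-θ by ring]; exact hth4)
    have hsqrt : Real.sqrt ((Γ₀ * W ^ θ) * ((2 + (3/2)*K) * W)) ≤ W ^ δ := by
      calc Real.sqrt ((Γ₀ * W ^ θ) * ((2 + (3/2)*K) * W))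
          ≤ Real.sqrt (W ^ δ * W ^ δ) := Real.sqrt_le_sqrt hprod
        _ = W ^ δ := Real.sqrt_mul_self hWδpos.le
    calc lam ≤ Γ₀ * W ^ θ + W ^ δ + Real.sqrt ((Γ₀ * W ^ θ) * ((2 + (3/2)*K) * W)) := hbound
      _ ≤ W ^ δ + W ^ δ + W ^ δ := by linarith
      _ ≤ 5 * W ^ δ := by linarith
  have hx01 : (0:ℝ) ≤ (n:ℝ) ^ (-(1/2):ℝ) := Real.rpow_nonneg hnpos.le _
  have hx1 : (n:ℝ) ^ (-(1/2):ℝ) ≤ 1 :=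
    Real.rpow_le_one_of_one_le_of_nonpos (by linarith) (by norm_num)
  calc ENNReal.ofReal (1 - (n:ℝ) ^ (-(1/2):ℝ))
      ≤ 1 - ENNReal.ofReal ((n:ℝ) ^ (-(1/2):ℝ)) := by
        refine ENNReal.le_sub_of_add_le_right ENNReal.ofReal_ne_top ?_
        rw [← ENNReal.ofReal_add (by linarith) hx01, sub_add_cancel]
        simp
    _ ≤ 1 - μ n Gᶜ := tsub_le_tsub_left hcompl 1
    _ = μ n G := by
        rw [prob_compl_eq_one_sub hGmeas]
        exact ENNReal.sub_sub_cancel ENNReal.one_ne_top prob_le_one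
    _ ≤ μ n _ := measure_mono hsubG
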